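/- Let N ∈ ℕ, let x₀ be a real sequence supported in {1,…,N} with ‖x₀‖_B ≤ 1, let δ > 0, and let n > N. Then for both choices of sign, ‖x₀ ± (δ/(2n)) ∑_{i=n}^{2n−1} e_i‖_B² ≤ ‖x₀‖_B² + δN²/n + δ²/4. -/

import Mathlib

open Filter Topology

/-- A finite set of (positive) indices is admissible if it is nonempty and its cardinality
is at most its minimum. -/
def BAdmissible (E : Finset ℕ) : Prop := E.Nonempty ∧ ∀ i ∈ E, E.card ≤ i

/-- The set of values whose supremum defines the Baernstein norm of a real sequence `x`:
all numbers `(∑_{j<k} (∑_{i ∈ E j} |x i|)²)^{1/2}` over finite increasing chains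
`E 0 < E 1 < ... < E (k-1)` of admissible sets. -/
def baernsteinSet (x : ℕ → ℝ) : Set ℝ :=
  {r | ∃ (k : ℕ) (E : ℕ → Finset ℕ),
    (∀ j < k, BAdmissible (E j)) ∧
    (∀ j, j + 1 < k → ∀ a ∈ E j, ∀ b ∈ E (j + 1), a < b) ∧
    r = Real.sqrt (∑ j ∈ Finset.range k, (∑ i ∈ E j, |x i|) ^ 2)}

/-- The Baernstein norm of a real sequence (as a supremum in `ℝ`). -/
noncomputable def baernsteinNorm (x : ℕ → ℝ) : ℝ := sSup (baernsteinSet x)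

lemma chain_lt {k : ℕ} {E : ℕ → Finset ℕ}
    (hadm : ∀ j < k, BAdmissible (E j))
    (hord : ∀ j, j + 1 < k → ∀ a ∈ E j, ∀ b ∈ E (j + 1), a < b) :
    ∀ j j', j < j' → j' < k → ∀ a ∈ E j, ∀ b ∈ E j', a < b := by
  intro j j' hjj' hj'k
  induction j' with
  | zero => omega
  | succ m ih =>
    intro a ha b hb
    rcases Nat.lt_succ_iff_lt_or_eq.mp hjj' with h | h
    · obtain ⟨⟨c, hc⟩, -⟩ := hadm m (by omega)
      exact lt_trans (ih h (by omega) a ha c hc) (hord m (by omega) c hc b hb)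
    · subst h; exact hord j (by omega) a ha b hb

lemma chain_disjoint {k : ℕ} {E : ℕ → Finset ℕ}
    (hadm : ∀ j < k, BAdmissible (E j))
    (hord : ∀ j, j + 1 < k → ∀ a ∈ E j, ∀ b ∈ E (j + 1), a < b) :
    ∀ j ∈ Finset.range k, ∀ j' ∈ Finset.range k, j ≠ j' → Disjoint (E j) (E j') := by
  intro j hj j' hj' hne
  simp only [Finset.mem_range] at hj hj'
  rw [Finset.disjoint_left]
  intro a haj haj'
  rcases hne.lt_or_gt with h | h
  · exact lt_irrefl a (chain_lt hadm hord j j' h hj' a haj a haj')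
  · exact lt_irrefl a (chain_lt hadm hord j' j h hj a haj' a haj)

lemma zero_mem_baernsteinSet (x : ℕ → ℝ) : (0:ℝ) ∈ baernsteinSet x :=
  ⟨0, fun _ => ∅, by simp, by simp, by simp⟩

lemma baernsteinSet_nonneg (x : ℕ → ℝ) : ∀ r ∈ baernsteinSet x, 0 ≤ r := by
  rintro r ⟨k, E, -, -, rfl⟩; exact Real.sqrt_nonneg _

lemma baernsteinNorm_nonneg (x : ℕ → ℝ) : 0 ≤ baernsteinNorm x :=
  Real.sSup_nonneg (baernsteinSet_nonneg x)

lemma sum_sq_le_sq_sum {s : Finset ℕ} {a : ℕ → ℝ} (h : ∀ j ∈ s, 0 ≤ a j) :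
    ∑ j ∈ s, (a j)^2 ≤ (∑ j ∈ s, a j)^2 := by
  have key : ∀ j ∈ s, (a j)^2 ≤ a j * ∑ i ∈ s, a i := fun j hj => by
    rw [sq]; exact mul_le_mul_of_nonneg_left (Finset.single_le_sum h hj) (h j hj)
  calc ∑ j ∈ s, (a j)^2 ≤ ∑ j ∈ s, a j * ∑ i ∈ s, a i := Finset.sum_le_sum key
    _ = (∑ j ∈ s, a j)^2 := by rw [← Finset.sum_mul, sq]

lemma sum_le_of_unique_support {k : ℕ} {f : ℕ → ℝ} {M : ℝ}
    (hM : 0 ≤ M)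
    (h0 : ∀ j ∈ Finset.range k, 0 ≤ f j)
    (hle : ∀ j ∈ Finset.range k, f j ≠ 0 → f j ≤ M)
    (huniq : ∀ j ∈ Finset.range k, ∀ j' ∈ Finset.range k, f j ≠ 0 → f j' ≠ 0 → j = j') :
    ∑ j ∈ Finset.range k, f j ≤ M := by
  by_cases h : ∃ j ∈ Finset.range k, f j ≠ 0
  · obtain ⟨j₀, hj₀, hfj₀⟩ := h
    have : ∑ j ∈ Finset.range k, f j = f j₀ := by
      apply Finset.sum_eq_single_of_mem j₀ hj₀
      intro b hb hbne
      by_contra hfb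
      exact hbne (huniq b hb j₀ hj₀ hfb hfj₀)
    rw [this]; exact hle j₀ hj₀ hfj₀
  · push_neg at h
    have : ∑ j ∈ Finset.range k, f j = 0 := Finset.sum_eq_zero h
    rw [this]; exact hM

lemma bddAbove_baernsteinSet {x : ℕ → ℝ} {N : ℕ} (hsupp : ∀ i, x i ≠ 0 → i ≤ N) :
    BddAbove (baernsteinSet x) := by
  use ∑ i ∈ Finset.range (N+1), |x i|
  rintro r ⟨k, E, hadm, hord, rfl⟩
  have hA : ∀ j ∈ Finset.range k, 0 ≤ ∑ i ∈ E j, |x i| :=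
    fun j _ => Finset.sum_nonneg fun i _ => abs_nonneg _
  have h1 : Real.sqrt (∑ j ∈ Finset.range k, (∑ i ∈ E j, |x i|)^2)
      ≤ ∑ j ∈ Finset.range k, ∑ i ∈ E j, |x i| := by
    rw [show (∑ j ∈ Finset.range k, ∑ i ∈ E j, |x i|)
        = Real.sqrt ((∑ j ∈ Finset.range k, ∑ i ∈ E j, |x i|)^2) from
      (Real.sqrt_sq (Finset.sum_nonneg hA)).symm]
    exact Real.sqrt_le_sqrt (sum_sq_le_sq_sum hA)
  refine h1.trans ?_
  have h2 : ∀ j ∈ Finset.range k,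
      ∑ i ∈ E j, |x i| = ∑ i ∈ (E j).filter (· ≤ N), |x i| := by
    intro j _
    refine (Finset.sum_subset (Finset.filter_subset _ _) ?_).symm
    intro i hi hni
    simp only [Finset.mem_filter, not_and, not_le] at hni
    have hNi : N < i := hni hi
    have : x i = 0 := by
      by_contra h
      exact absurd (hsupp i h) (by omega)
    simp [this]
  rw [Finset.sum_congr rfl h2]
  have hdisj : ∀ j ∈ Finset.range k, ∀ j' ∈ Finset.range k, j ≠ j' →
      Disjoint ((E j).filter (· ≤ N)) ((E j').filter (· ≤ N)) :=
    fun j hj j' hj' hne => Finset.disjoint_filter_filter (chain_disjoint hadm hord j hj j' hj' hne)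
  rw [← Finset.sum_biUnion hdisj]
  apply Finset.sum_le_sum_of_subset_of_nonneg
  · intro i hi
    simp only [Finset.mem_biUnion] at hi
    obtain ⟨j, -, hf⟩ := hi
    have h := (Finset.mem_filter.mp hf).2
    simp only [Finset.mem_range]
    omega
  · intro i _ _; exact abs_nonneg _

lemma abs_le_baernsteinNorm {x : ℕ → ℝ} (hb : BddAbove (baernsteinSet x))
    {i : ℕ} (hi : 1 ≤ i) : |x i| ≤ baernsteinNorm x := by
  have hmem : |x i| ∈ baernsteinSet x := by
    refine ⟨1, fun _ => {i}, ?_, ?_, ?_⟩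
    · intro j _
      exact ⟨Finset.singleton_nonempty i, fun a ha => by
        simp only [Finset.mem_singleton] at ha; simp [ha]; omega⟩
    · intro j hj; omega
    · simp [Real.sqrt_sq_eq_abs]
  exact le_csSup hb hmem
theorem baernstein_perturbation_estimate (N : ℕ) (x₀ : ℕ → ℝ)
    (hsupp : ∀ i, x₀ i ≠ 0 → 1 ≤ i ∧ i ≤ N)
    (hx₀ : baernsteinNorm x₀ ≤ 1)
    (δ : ℝ) (hδ : 0 < δ) (n : ℕ) (hn : N < n)
    (σ : ℝ) (hσ : σ = 1 ∨ σ = -1) :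
    baernsteinNorm
        (fun i => x₀ i + σ * (δ / (2 * n)) * (if n ≤ i ∧ i ≤ 2 * n - 1 then 1 else 0)) ^ 2
      ≤ baernsteinNorm x₀ ^ 2 + δ * N ^ 2 / n + δ ^ 2 / 4 := by
  set y : ℕ → ℝ :=
    fun i => x₀ i + σ * (δ / (2 * n)) * (if n ≤ i ∧ i ≤ 2 * n - 1 then 1 else 0) with hy
  have hn1 : 1 ≤ n := by omega
  have hnR : (0:ℝ) < n := by exact_mod_cast Nat.pos_of_ne_zero (by omega)
  have hσ1 : |σ| = 1 := by rcases hσ with rfl | rfl <;> simp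
  have hd : (0:ℝ) < δ / (2 * n) := by positivity
  have hbddx : BddAbove (baernsteinSet x₀) :=
    bddAbove_baernsteinSet (fun i hi => (hsupp i hi).2)
  have hxnn : 0 ≤ baernsteinNorm x₀ := baernsteinNorm_nonneg x₀
  set C : ℝ := baernsteinNorm x₀ ^ 2 + δ * N ^ 2 / n + δ ^ 2 / 4 with hC
  have hC0 : 0 ≤ C := by positivity
  have key : ∀ r ∈ baernsteinSet y, r ≤ Real.sqrt C := by
    rintro r ⟨k, E, hadm, hord, rfl⟩
    set A : ℕ → ℝ := fun j => ∑ i ∈ E j, |x₀ i| with hA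
    set F : ℕ → Finset ℕ := fun j => (E j).filter (fun i => n ≤ i ∧ i ≤ 2 * n - 1) with hF
    set B : ℕ → ℝ := fun j => δ / (2 * n) * (F j).card with hB
    have hA0 : ∀ j ∈ Finset.range k, 0 ≤ A j :=
      fun j _ => Finset.sum_nonneg fun i _ => abs_nonneg _
    have hB0 : ∀ j ∈ Finset.range k, 0 ≤ B j :=
      fun j _ => by positivity
    -- the split of each block sum
    have hsplit : ∀ j ∈ Finset.range k, ∑ i ∈ E j, |y i| = A j + B j := by
      intro j _
      have hpt : ∀ i ∈ E j,
          |y i| = |x₀ i| + δ / (2 * n) * (if n ≤ i ∧ i ≤ 2 * n - 1 then 1 else 0) := by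
        intro i _
        by_cases hi : n ≤ i ∧ i ≤ 2 * n - 1
        · have hx0 : x₀ i = 0 := by
            by_contra h
            have := (hsupp i h).2
            omega
          simp only [hy, if_pos hi, hx0, mul_one, zero_add, abs_zero, abs_mul, hσ1, one_mul]
          exact abs_of_pos hd
        · simp [hy, hi, if_neg hi]
      rw [Finset.sum_congr rfl hpt, Finset.sum_add_distrib, ← Finset.mul_sum,
        Finset.sum_boole]
    -- disjointness
    have hdisj := chain_disjoint hadm hord
    have hdisjF : ∀ j ∈ Finset.range k, ∀ j' ∈ Finset.range k, j ≠ j' →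
        Disjoint (F j) (F j') :=
      fun j hj j' hj' hne => Finset.disjoint_filter_filter (hdisj j hj j' hj' hne)
    -- bound on ∑ A²
    have hAsq : ∑ j ∈ Finset.range k, A j ^ 2 ≤ baernsteinNorm x₀ ^ 2 := by
      have hmem : Real.sqrt (∑ j ∈ Finset.range k, A j ^ 2) ∈ baernsteinSet x₀ :=
        ⟨k, E, hadm, hord, rfl⟩
      have hle := le_csSup hbddx hmem
      have hnnsum : 0 ≤ ∑ j ∈ Finset.range k, A j ^ 2 :=
        Finset.sum_nonneg fun j _ => sq_nonneg _
      calc ∑ j ∈ Finset.range k, A j ^ 2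
          = Real.sqrt (∑ j ∈ Finset.range k, A j ^ 2) ^ 2 := (Real.sq_sqrt hnnsum).symm
        _ ≤ baernsteinNorm x₀ ^ 2 := pow_le_pow_left₀ (Real.sqrt_nonneg _) hle 2
    -- bound on the cross term
    have hABle : ∑ j ∈ Finset.range k, A j * B j ≤ N * (δ / (2 * n) * N) := by
      apply sum_le_of_unique_support (by positivity)
      · exact fun j hj => mul_nonneg (hA0 j hj) (hB0 j hj)
      · intro j hj hne
        simp only [Finset.mem_range] at hj
        have hAne : A j ≠ 0 := fun h => hne (by simp [h])
        obtain ⟨i₀, hi₀E, hi₀⟩ : ∃ i ∈ E j, x₀ i ≠ 0 := by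
          by_contra h
          push_neg at h
          exact hAne (Finset.sum_eq_zero fun i hi => by simp [h i hi])
        have hi₀N : i₀ ≤ N := (hsupp i₀ hi₀).2
        have hcard : (E j).card ≤ N := le_trans ((hadm j hj).2 i₀ hi₀E) hi₀N
        have hAle : A j ≤ (N : ℝ) := by
          have h1 : A j ≤ ∑ _i ∈ E j, (1:ℝ) := by
            apply Finset.sum_le_sum
            intro i hi
            have hi1 : 1 ≤ i := by
              have h2 := (hadm j hj).2 i hi
              have h3 := Finset.card_pos.mpr (hadm j hj).1
              omega
            exact le_trans (abs_le_baernsteinNorm hbddx hi1) hx₀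
          rw [Finset.sum_const, nsmul_eq_mul, mul_one] at h1
          exact h1.trans (by exact_mod_cast hcard)
        have hBle : B j ≤ δ / (2 * n) * N := by
          have : (F j).card ≤ N := le_trans (Finset.card_filter_le _ _) hcard
          exact mul_le_mul_of_nonneg_left (by exact_mod_cast this) hd.le
        exact mul_le_mul hAle hBle (hB0 j (Finset.mem_range.mpr hj)) (by positivity)
      · intro j hj j' hj' hne hne'
        by_contra hjj
        simp only [Finset.mem_range] at hj hj'
        have hget : ∀ m, m < k → A m * B m ≠ 0 →
            (∃ a ∈ E m, n ≤ a) ∧ (∃ b ∈ E m, b ≤ N) := by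
          intro m hm hno
          have hAne : A m ≠ 0 := fun h => hno (by simp [h])
          have hBne : B m ≠ 0 := fun h => hno (by simp [h])
          constructor
          · have : (F m).card ≠ 0 := by
              intro h
              exact hBne (by simp [hB, h])
            obtain ⟨a, ha⟩ := Finset.card_pos.mp (Nat.pos_of_ne_zero this)
            have ha' := Finset.mem_filter.mp ha
            exact ⟨a, ha'.1, ha'.2.1⟩
          · obtain ⟨b, hbE, hb⟩ : ∃ i ∈ E m, x₀ i ≠ 0 := by
              by_contra h
              push_neg at h
              exact hAne (Finset.sum_eq_zero fun i hi => by simp [h i hi])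
            exact ⟨b, hbE, (hsupp b hb).2⟩
        rcases Nat.lt_or_ge j j' with h | h
        · obtain ⟨a, haE, hna⟩ := (hget j hj hne).1
          obtain ⟨b, hbE, hbN⟩ := (hget j' hj' hne').2
          have := chain_lt hadm hord j j' h hj' a haE b hbE
          omega
        · have h' : j' < j := by omega
          obtain ⟨a, haE, hna⟩ := (hget j' hj' hne').1
          obtain ⟨b, hbE, hbN⟩ := (hget j hj hne).2
          have := chain_lt hadm hord j' j h' hj a haE b hbE
          omega
    -- bound on ∑ B²
    have hBsq : ∑ j ∈ Finset.range k, B j ^ 2 ≤ δ ^ 2 / 4 := by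
      have hcsum : ∑ j ∈ Finset.range k, (F j).card ≤ n := by
        rw [← Finset.card_biUnion hdisjF]
        have hsub : (Finset.range k).biUnion F ⊆ Finset.Icc n (2 * n - 1) := by
          intro i hi
          simp only [Finset.mem_biUnion] at hi
          obtain ⟨j, -, hf⟩ := hi
          have h := (Finset.mem_filter.mp hf).2
          simp only [Finset.mem_Icc]
          omega
        have := Finset.card_le_card hsub
        rw [Nat.card_Icc] at this
        omega
      have hcsumR : ∑ j ∈ Finset.range k, ((F j).card : ℝ) ≤ (n : ℝ) := by
        rw [← Nat.cast_sum]
        exact_mod_cast hcsum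
      have h1 : ∑ j ∈ Finset.range k, B j ^ 2
          = (δ / (2 * n)) ^ 2 * ∑ j ∈ Finset.range k, ((F j).card : ℝ) ^ 2 := by
        rw [Finset.mul_sum]
        exact Finset.sum_congr rfl fun j _ => by rw [hB]; ring
      have h2 : ∑ j ∈ Finset.range k, ((F j).card : ℝ) ^ 2
          ≤ (n : ℝ) ^ 2 := by
        refine le_trans (sum_sq_le_sq_sum fun j _ => by positivity) ?_
        exact pow_le_pow_left₀ (Finset.sum_nonneg fun j _ => by positivity) hcsumR 2
      calc ∑ j ∈ Finset.range k, B j ^ 2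
          ≤ (δ / (2 * n)) ^ 2 * (n : ℝ) ^ 2 := by
            rw [h1]; exact mul_le_mul_of_nonneg_left h2 (by positivity)
        _ = δ ^ 2 / 4 := by field_simp; ring
    -- assemble
    have hsum : ∑ j ∈ Finset.range k, (∑ i ∈ E j, |y i|) ^ 2 ≤ C := by
      have heq : ∑ j ∈ Finset.range k, (∑ i ∈ E j, |y i|) ^ 2
          = ∑ j ∈ Finset.range k, (A j ^ 2 + 2 * (A j * B j) + B j ^ 2) := by
        refine Finset.sum_congr rfl fun j hj => ?_
        rw [hsplit j hj]; ring
      rw [heq, Finset.sum_add_distrib, Finset.sum_add_distrib, ← Finset.mul_sum]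
      have hcross : 2 * ∑ j ∈ Finset.range k, A j * B j ≤ δ * N ^ 2 / n := by
        have h2 : 2 * (N * (δ / (2 * n) * N)) = δ * (N:ℝ) ^ 2 / n := by
          field_simp
        nlinarith [hABle]
      rw [hC]
      have := add_le_add (add_le_add hAsq hcross) hBsq
      linarith
    exact Real.sqrt_le_sqrt hsum
  have h1 : baernsteinNorm y ≤ Real.sqrt C :=
    csSup_le ⟨0, zero_mem_baernsteinSet y⟩ key
  have h2 : 0 ≤ baernsteinNorm y := baernsteinNorm_nonneg y
  calc baernsteinNorm y ^ 2 ≤ Real.sqrt C ^ 2 := pow_le_pow_left₀ h2 h1 2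
    _ = C := Real.sq_sqrt hC0
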